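/- If J is a stable J-class of a semigroup S, then J is a D-class. -/

import Mathlib

namespace SG

variable {S : Type*} [Semigroup S]

/-- An ideal of a semigroup: a nonempty subset closed under left and right
multiplication by arbitrary elements. -/
def IsIdeal (I : Set S) : Prop :=
  I.Nonempty ∧ ∀ x ∈ I, ∀ a : S, a * x ∈ I ∧ x * a ∈ I

/-- The minimal ideal: an ideal contained in every ideal. -/
def IsMinIdeal (M : Set S) : Prop :=
  IsIdeal M ∧ ∀ I : Set S, IsIdeal I → M ⊆ I

/-- Every element of the set is regular. -/
def RegularSet (M : Set S) : Prop := ∀ m ∈ M, ∃ y : S, m * y * m = m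

/-- `f` is a retraction of the ideal `I` onto the minimal ideal `M`:
a homomorphism `I → M` fixing `M` pointwise. -/
def IsRetraction (I M : Set S) (f : S → S) : Prop :=
  (∀ x ∈ I, f x ∈ M) ∧ (∀ x ∈ I, ∀ y ∈ I, f (x * y) = f x * f y) ∧ ∀ x ∈ M, f x = x

/-- Green's R relation (via S¹ = `WithOne S`). -/
def GreenR (a b : S) : Prop :=
  (∃ u : WithOne S, (a : WithOne S) * u = (b : WithOne S)) ∧
    ∃ v : WithOne S, (b : WithOne S) * v = (a : WithOne S)

/-- Green's L relation. -/
def GreenL (a b : S) : Prop :=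
  (∃ u : WithOne S, u * (a : WithOne S) = (b : WithOne S)) ∧
    ∃ v : WithOne S, v * (b : WithOne S) = (a : WithOne S)

/-- Green's J relation. -/
def GreenJ (a b : S) : Prop :=
  (∃ u v : WithOne S, u * (a : WithOne S) * v = (b : WithOne S)) ∧
    ∃ u v : WithOne S, u * (b : WithOne S) * v = (a : WithOne S)

/-- Green's H relation. -/
def GreenH (a b : S) : Prop := GreenR a b ∧ GreenL a b

/-- Green's D relation, as R ∘ L. -/
def GreenD (a b : S) : Prop := ∃ c : S, GreenR a c ∧ GreenL c b

/-- A set is stable if for its elements `x`: `xa J x → xa R x` and `ax J x → ax L x`. -/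
def StableSet (J : Set S) : Prop :=
  ∀ x ∈ J, ∀ a : S, (GreenJ (x * a) x → GreenR (x * a) x) ∧ (GreenJ (a * x) x → GreenL (a * x) x)

/-- The set is a J-class. -/
def IsJClass (J : Set S) : Prop := ∃ a : S, J = {b | GreenJ a b}

/-- The set is a D-class. -/
def IsDClass (J : Set S) : Prop := ∃ a : S, J = {b | GreenD a b}

/-- A binary relation is a congruence on the semigroup. -/
def IsCongruence (r : S → S → Prop) : Prop :=
  Equivalence r ∧ ∀ a b c : S, r a b → r (c * a) (c * b) ∧ r (a * c) (b * c)

/-- `N` is a normal subgroup of the subgroup `G` of `S` with identity `e`. -/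
def IsNormalIn (N G : Set S) (e : S) : Prop :=
  N ⊆ G ∧ e ∈ N ∧ (∀ x ∈ N, ∀ y ∈ N, x * y ∈ N) ∧
    (∀ x ∈ N, ∃ y ∈ N, x * y = e ∧ y * x = e) ∧
    ∀ g ∈ G, ∀ g' ∈ G, g * g' = e → g' * g = e → ∀ x ∈ N, g * x * g' ∈ N

/-- The relation ν_N = S¹(N × N)S¹ ∩ (J × J). -/
def Nu (J N : Set S) (a b : S) : Prop :=
  a ∈ J ∧ b ∈ J ∧ ∃ x ∈ N, ∃ y ∈ N, ∃ s t : WithOne S,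
    s * (x : WithOne S) * t = (a : WithOne S) ∧ s * (y : WithOne S) * t = (b : WithOne S)

/-- `J` is disjoint from `I` and is minimal among the J-classes of `S \ I`. -/
def MinimalJClassOutside (J I : Set S) : Prop :=
  (∀ a ∈ J, a ∉ I) ∧
    ∀ b : S, b ∉ I →
      (∃ a ∈ J, ∃ u v : WithOne S, u * (a : WithOne S) * v = (b : WithOne S)) → b ∈ J

end SG

/-- A stable J-class of a semigroup is a D-class. -/
theorem stmt3 {S : Type*} [Semigroup S] (J : Set S)
    (hJ : SG.IsJClass J) (hs : SG.StableSet J) : SG.IsDClass J := by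
  obtain ⟨a, rfl⟩ := hJ
  have ha : SG.GreenJ a a := ⟨⟨1, 1, by simp⟩, ⟨1, 1, by simp⟩⟩
  refine ⟨a, Set.ext fun b => ⟨?_, ?_⟩⟩
  · rintro ⟨⟨u, v, huv⟩, ⟨u', v', hb⟩⟩
    induction v with
    | one =>
      induction u with
      | one =>
        have hba : b = a := by
          have := huv; simp at this; exact_mod_cast this.symm
        rw [hba]
        exact ⟨a, ⟨⟨1, by simp⟩, ⟨1, by simp⟩⟩, ⟨⟨1, by simp⟩, ⟨1, by simp⟩⟩⟩
      | coe u₀ =>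
        have hb' : b = u₀ * a := by
          have := huv; simp at this
          exact_mod_cast this.symm
        subst hb'
        have hL : SG.GreenL (u₀ * a) a := by
          refine (hs a ha u₀).2 ⟨⟨u', v', ?_⟩, ⟨u₀, 1, by simp⟩⟩
          simpa using hb
        exact ⟨a, ⟨⟨1, by simp⟩, ⟨1, by simp⟩⟩, ⟨hL.2, hL.1⟩⟩
    | coe v₀ =>
      have hJc : SG.GreenJ (a * v₀) a := by
        refine ⟨⟨u' * u, v', ?_⟩, ⟨1, v₀, by simp⟩⟩
        push_cast
        rw [show u' * u * ((a : WithOne S) * v₀) * v' = u' * (u * a * v₀) * v' by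
          simp [mul_assoc], huv, hb]
      have hR : SG.GreenR (a * v₀) a := (hs a ha v₀).1 hJc
      induction u with
      | one =>
        have hb' : b = a * v₀ := by
          have := huv; simp at this
          exact_mod_cast this.symm
        subst hb'
        exact ⟨a * v₀, ⟨hR.2, hR.1⟩, ⟨⟨1, by simp⟩, ⟨1, by simp⟩⟩⟩
      | coe u₀ =>
        have hb' : b = u₀ * (a * v₀) := by
          have := huv; push_cast at this
          rw [mul_assoc] at this
          exact_mod_cast this.symm
        subst hb'
        have hc : a * v₀ ∈ {b | SG.GreenJ a b} := ⟨hJc.2, hJc.1⟩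
        have hL : SG.GreenL (u₀ * (a * v₀)) (a * v₀) := by
          refine (hs _ hc u₀).2 ⟨⟨u', v' * v₀, ?_⟩, ⟨u₀, 1, by simp⟩⟩
          push_cast
          rw [show u' * ((u₀ : WithOne S) * ((a : WithOne S) * v₀)) * (v' * v₀)
              = (u' * ((u₀ : WithOne S) * (a * v₀)) * v') * v₀ by simp [mul_assoc]]
          rw [show u' * ((u₀ : WithOne S) * ((a : WithOne S) * v₀)) * v'
              = u' * (u₀ * a * v₀) * v' by simp [mul_assoc], huv, hb]
        exact ⟨a * v₀, ⟨hR.2, hR.1⟩, ⟨hL.2, hL.1⟩⟩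
  · rintro ⟨c, ⟨⟨u, hu⟩, ⟨u', hu'⟩⟩, ⟨⟨w, hw⟩, ⟨w', hw'⟩⟩⟩
    exact ⟨⟨w, u, by rw [mul_assoc, hu, hw]⟩,
           ⟨w', u', by rw [hw', hu']⟩⟩
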